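/- Let $H \in (0,1)$, $0 < \tau_1 < T$, and let $B^H$ be a fractional Brownian motion. Define $\hat{B}_s^H = \frac{B_{\tau_1}^H}{2\tau_1^{2H}}(s^{2H} + \tau_1^{2H} - |s-\tau_1|^{2H})$ for $s \ge \tau_1$ and $\hat{B}_s^H = 0$ for $s < \tau_1$. Then the aggregate squared error distortion satisfies $\mathbb{E}\int_0^T (B_s^H - \hat{B}_s^H)^2\, ds = \frac{T^{2H+1}}{2H+1} - \frac{1}{4 \tau_1^{2H}} \int_{\tau_1}^T (s^{2H} + \tau_1^{2H} - |s - \tau_1|^{2H})^2\, ds$. -/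

import Mathlib

open MeasureTheory

set_option maxHeartbeats 1000000

theorem fbm_one_sample_distortion {Ω : Type*} [MeasurableSpace Ω] (μ : Measure Ω)
    [IsProbabilityMeasure μ]
    (H τ1 T : ℝ) (hH : H ∈ Set.Ioo (0:ℝ) 1) (hτ1 : 0 < τ1) (hτ1T : τ1 < T)
    (B : ℝ → Ω → ℝ)
    (hcov : ∀ t s : ℝ, 0 ≤ t → 0 ≤ s →
      ∫ ω, B t ω * B s ω ∂μ = (1/2) * (t ^ (2*H) + s ^ (2*H) - |t - s| ^ (2*H)))
    (hint : ∀ t s : ℝ, Integrable (fun ω => B t ω * B s ω) μ)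
    (Bhat : ℝ → Ω → ℝ)
    (hBhat_lt : ∀ s : ℝ, s < τ1 → Bhat s = fun _ => 0)
    (hBhat_ge : ∀ s : ℝ, τ1 ≤ s → Bhat s = fun ω =>
      B τ1 ω / (2 * τ1 ^ (2*H)) * (s ^ (2*H) + τ1 ^ (2*H) - |s - τ1| ^ (2*H)))
    (hFub : Integrable (Function.uncurry fun s ω => (B s ω - Bhat s ω) ^ 2)
      ((volume.restrict (Set.Ioc 0 T)).prod μ)) :
    ∫ ω, (∫ s in (0:ℝ)..T, (B s ω - Bhat s ω) ^ 2) ∂μ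
      = T ^ (2*H+1) / (2*H+1)
        - (1 / (4 * τ1 ^ (2*H)))
          * ∫ s in τ1..T, (s ^ (2*H) + τ1 ^ (2*H) - |s - τ1| ^ (2*H)) ^ 2 := by
  obtain ⟨hH0, hH1⟩ := hH
  have h2H : (0:ℝ) < 2*H := by linarith
  have hτP : (0:ℝ) < τ1 ^ (2*H) := Real.rpow_pos_of_pos hτ1 _
  have hT : (0:ℝ) < T := hτ1.trans hτ1T
  -- the pointwise expectation
  have key : ∀ s : ℝ, 0 ≤ s → ∫ ω, (B s ω - Bhat s ω) ^ 2 ∂μ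
      = s ^ (2*H) - Set.indicator (Set.Ici τ1)
          (fun u => (u ^ (2*H) + τ1 ^ (2*H) - |u - τ1| ^ (2*H)) ^ 2 / (4 * τ1 ^ (2*H))) s := by
    intro s hs
    rcases lt_or_ge s τ1 with h | h
    · rw [hBhat_lt s h]
      have e1 : (fun ω => (B s ω - (fun _ : Ω => (0:ℝ)) ω) ^ 2) = fun ω => B s ω * B s ω := by
        funext ω; ring
      rw [e1, hcov s s hs hs,
        Set.indicator_of_notMem (by simpa using not_le.mpr h)]
      rw [sub_self, abs_zero, Real.zero_rpow h2H.ne']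
      ring
    · rw [hBhat_ge s h]
      set K : ℝ := s ^ (2*H) + τ1 ^ (2*H) - |s - τ1| ^ (2*H) with hKdef
      have e1 : (fun ω => (B s ω - (fun ω => B τ1 ω / (2 * τ1 ^ (2*H)) * K) ω) ^ 2)
          = fun ω => (B s ω * B s ω - (K / τ1 ^ (2*H)) * (B s ω * B τ1 ω))
              + (K / (2 * τ1 ^ (2*H))) ^ 2 * (B τ1 ω * B τ1 ω) := by
        funext ω; field_simp; ring
      have hadd := integral_add (μ := μ)
        (f := fun ω => B s ω * B s ω - K / τ1 ^ (2*H) * (B s ω * B τ1 ω))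
        (g := fun ω => (K / (2 * τ1 ^ (2*H))) ^ 2 * (B τ1 ω * B τ1 ω))
        ((hint s s).sub ((hint s τ1).const_mul _)) ((hint τ1 τ1).const_mul _)
      have hsub := integral_sub (μ := μ)
        (f := fun ω => B s ω * B s ω)
        (g := fun ω => K / τ1 ^ (2*H) * (B s ω * B τ1 ω))
        (hint s s) ((hint s τ1).const_mul _)
      rw [e1, hadd, hsub, integral_const_mul, integral_const_mul,
        hcov s s hs hs, hcov s τ1 hs hτ1.le, hcov τ1 τ1 hτ1.le hτ1.le,
        Set.indicator_of_mem (Set.mem_Ici.mpr h)]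
      rw [sub_self, sub_self, abs_zero, Real.zero_rpow h2H.ne', hKdef]
      field_simp
      ring
  -- continuity facts
  have hc1 : Continuous (fun s : ℝ => s ^ (2*H)) := Real.continuous_rpow_const h2H.le
  have hcK : Continuous (fun s : ℝ => (s ^ (2*H) + τ1 ^ (2*H) - |s - τ1| ^ (2*H)) ^ 2
      / (4 * τ1 ^ (2*H))) := by
    apply Continuous.div_const
    exact ((hc1.add continuous_const).sub
      (hc1.comp (continuous_abs.comp (continuous_id.sub continuous_const)))).pow 2
  have hInt1 : IntegrableOn (fun s : ℝ => s ^ (2*H)) (Set.Ioc 0 T) := hc1.integrableOn_Ioc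
  have hIntInd : Integrable (Set.indicator (Set.Ici τ1)
      (fun u => (u ^ (2*H) + τ1 ^ (2*H) - |u - τ1| ^ (2*H)) ^ 2 / (4 * τ1 ^ (2*H))))
      (volume.restrict (Set.Ioc 0 T)) := by
    have h1 : IntegrableOn (fun u : ℝ =>
        (u ^ (2*H) + τ1 ^ (2*H) - |u - τ1| ^ (2*H)) ^ 2 / (4 * τ1 ^ (2*H)))
        (Set.Ioc 0 T) := hcK.integrableOn_Ioc
    exact h1.indicator measurableSet_Ici
  have hswap := integral_integral_swap hFub
  calc ∫ ω, (∫ s in (0:ℝ)..T, (B s ω - Bhat s ω) ^ 2) ∂μ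
      = ∫ ω, (∫ s in Set.Ioc 0 T, (B s ω - Bhat s ω) ^ 2) ∂μ := by
        simp_rw [intervalIntegral.integral_of_le hT.le]
    _ = ∫ s in Set.Ioc 0 T, (∫ ω, (B s ω - Bhat s ω) ^ 2 ∂μ) := hswap.symm
    _ = ∫ s in Set.Ioc 0 T, (s ^ (2*H) - Set.indicator (Set.Ici τ1)
          (fun u => (u ^ (2*H) + τ1 ^ (2*H) - |u - τ1| ^ (2*H)) ^ 2 / (4 * τ1 ^ (2*H))) s) := by
        refine setIntegral_congr_fun measurableSet_Ioc fun s hs => key s hs.1.le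
    _ = (∫ s in Set.Ioc 0 T, s ^ (2*H))
          - ∫ s in Set.Ioc 0 T, Set.indicator (Set.Ici τ1)
          (fun u => (u ^ (2*H) + τ1 ^ (2*H) - |u - τ1| ^ (2*H)) ^ 2 / (4 * τ1 ^ (2*H))) s :=
        integral_sub hInt1 hIntInd
    _ = T ^ (2*H+1) / (2*H+1)
        - (1 / (4 * τ1 ^ (2*H)))
          * ∫ s in τ1..T, (s ^ (2*H) + τ1 ^ (2*H) - |s - τ1| ^ (2*H)) ^ 2 := by
        congr 1
        · rw [← intervalIntegral.integral_of_le hT.le,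
            integral_rpow (Or.inl (by linarith : (-1:ℝ) < 2*H)),
            Real.zero_rpow (by linarith : 2*H+1 ≠ 0)]
          ring
        · rw [integral_indicator measurableSet_Ici, Measure.restrict_restrict measurableSet_Ici]
          have hset : Set.Ici τ1 ∩ Set.Ioc 0 T = Set.Icc τ1 T := by
            ext x
            simp only [Set.mem_inter_iff, Set.mem_Ici, Set.mem_Ioc, Set.mem_Icc]
            constructor
            · rintro ⟨h1, _, h3⟩; exact ⟨h1, h3⟩
            · rintro ⟨h1, h2⟩; exact ⟨h1, hτ1.trans_le h1, h2⟩
          rw [hset, integral_Icc_eq_integral_Ioc, ← intervalIntegral.integral_of_le hτ1T.le,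
            intervalIntegral.integral_div]
          rw [div_eq_mul_inv, mul_comm, ← one_div]
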